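/- Let R be a unital non-associative ring, σ a unital ring endomorphism of R, and δ a σ-derivation of R. Define additive maps π_i^m : R → R for integers i and natural numbers m by π_0^0 = id_R, π_i^m = 0 whenever i < 0 or i > m, and the recursion π_l^{m+1} = π_{l-1}^m ∘ σ + π_l^m ∘ δ. Then the maps also satisfy the reversed recursion π_l^{m+1} = σ ∘ π_{l-1}^m + δ ∘ π_l^m for all integers l and natural numbers m. -/
import Mathlib


/-- A non-unital hom-associative ring structure on an additive abelian group `R`:
a biadditive multiplication `mul` and an additive twisting map `α` satisfying
`α a * (b * c) = (a * b) * α c`. -/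
structure IsHomRing {R : Type*} [AddCommGroup R] (mul : R → R → R) (α : R → R) : Prop where
  add_mul : ∀ a b c : R, mul (a + b) c = mul a c + mul b c
  mul_add : ∀ a b c : R, mul a (b + c) = mul a b + mul a c
  alpha_add : ∀ a b : R, α (a + b) = α a + α b
  hom_assoc : ∀ a b c : R, mul (α a) (mul b c) = mul (mul a b) (α c)

/-- A right `R`-hom-module structure on an additive abelian group `M`:
a biadditive scalar multiplication `smul : M → R → M` and an additive map `αM`
satisfying `αM m • (r * s) = (m • r) • αR s`. -/
structure IsHomModule {R M : Type*} [AddCommGroup R] [AddCommGroup M]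
    (mul : R → R → R) (αR : R → R) (smul : M → R → M) (αM : M → M) : Prop where
  add_smul : ∀ (m n : M) (r : R), smul (m + n) r = smul m r + smul n r
  smul_add : ∀ (m : M) (r s : R), smul m (r + s) = smul m r + smul m s
  alpha_add : ∀ m n : M, αM (m + n) = αM m + αM n
  hom_assoc : ∀ (m : M) (r s : R), smul (αM m) (mul r s) = smul (smul m r) (αR s)

/-- A hom-submodule: an additive subgroup (as a set) closed under the scalar
multiplication and invariant under the twisting map. -/
structure IsHomSubmodule {R M : Type*} [AddCommGroup M]
    (smul : M → R → M) (αM : M → M) (N : Set M) : Prop where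
  zero_mem : (0 : M) ∈ N
  add_mem : ∀ a b : M, a ∈ N → b ∈ N → a + b ∈ N
  neg_mem : ∀ a : M, a ∈ N → -a ∈ N
  smul_mem : ∀ a : M, a ∈ N → ∀ r : R, smul a r ∈ N
  alpha_mem : ∀ a : M, a ∈ N → αM a ∈ N

/-- A morphism of right `R`-hom-modules: an additive map commuting with the
twisting maps and preserving scalar multiplication. -/
def IsHomModuleHom {R M M' : Type*} [AddCommGroup M] [AddCommGroup M']
    (smul : M → R → M) (αM : M → M) (smul' : M' → R → M') (αM' : M' → M')
    (f : M → M') : Prop :=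
  (∀ a b : M, f (a + b) = f a + f b) ∧ (∀ m : M, f (αM m) = αM' (f m)) ∧
    ∀ (m : M) (r : R), f (smul m r) = smul' (f m) r

/-- A right hom-module is hom-noetherian if it has no infinite strictly
ascending chain of hom-submodules. -/
def HomNoetherian {R M : Type*} [AddCommGroup M] (smul : M → R → M) (αM : M → M) : Prop :=
  ¬ ∃ c : ℕ → Set M, (∀ n, IsHomSubmodule smul αM (c n)) ∧ ∀ n, c n ⊂ c (n + 1)

/-- the π-functions of an Ore extension of a unital non-associative
ring also satisfy the reversed recursion π_l^{m+1} = σ ∘ π_{l-1}^m + δ ∘ π_l^m. -/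
theorem pi_reversed_recursion {R : Type*} [AddCommGroup R] (mul : R → R → R) (one : R)
    (hadd_mul : ∀ a b c : R, mul (a + b) c = mul a c + mul b c)
    (hmul_add : ∀ a b c : R, mul a (b + c) = mul a b + mul a c)
    (hone : ∀ a : R, mul one a = a) (hone' : ∀ a : R, mul a one = a)
    (σ δ : R → R)
    (hσadd : ∀ a b : R, σ (a + b) = σ a + σ b)
    (hσmul : ∀ a b : R, σ (mul a b) = mul (σ a) (σ b))
    (hσone : σ one = one)
    (hδadd : ∀ a b : R, δ (a + b) = δ a + δ b)
    (hδ : ∀ a b : R, δ (mul a b) = mul (σ a) (δ b) + mul (δ a) b)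
    (π : ℕ → ℤ → R → R)
    (hπadd : ∀ (m : ℕ) (i : ℤ) (a b : R), π m i (a + b) = π m i a + π m i b)
    (hbase : ∀ a : R, π 0 0 a = a)
    (hzero : ∀ (m : ℕ) (i : ℤ), i < 0 ∨ (m : ℤ) < i → ∀ a : R, π m i a = 0)
    (hrec : ∀ (m : ℕ) (l : ℤ) (a : R), π (m + 1) l a = π m (l - 1) (σ a) + π m l (δ a)) :
    ∀ (m : ℕ) (l : ℤ) (a : R), π (m + 1) l a = σ (π m (l - 1) a) + δ (π m l a) := by
  have hσ0 : σ 0 = 0 := by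
    have := hσadd 0 0; simpa using this.symm
  have hδ0 : δ 0 = 0 := by
    have := hδadd 0 0; simpa using this.symm
  intro m
  induction m with
  | zero =>
    intro l a
    rw [hrec]
    rcases eq_or_ne l 0 with h0 | h0
    · subst h0
      rw [hzero 0 (0 - 1) (by left; norm_num), hzero 0 (0 - 1) (by left; norm_num),
        hbase, hbase, hσ0]
    · rcases eq_or_ne l 1 with h1 | h1
      · subst h1
        rw [show (1:ℤ) - 1 = 0 by ring, hbase, hbase,
          hzero 0 1 (by right; norm_num), hzero 0 1 (by right; norm_num), hδ0]
      · have hl : l < 0 ∨ (0:ℤ) < l := by omega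
        have hl1 : l - 1 < 0 ∨ (0:ℤ) < l - 1 := by omega
        rw [hzero 0 l hl, hzero 0 l hl, hzero 0 (l-1) hl1, hzero 0 (l-1) hl1, hσ0, hδ0]
    | succ m ih =>
    intro l a
    rw [hrec, ih (l - 1) (σ a), ih l (δ a), hrec, hrec, hσadd, hδadd,
      show l - 1 - 1 = l - 2 by ring]
    abel
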